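/- Define λ_k(x) = [ν_k(x) − (ν(x),μ(x)) μ_k(x)]/τ_n(x), the Gram–Schmidt orthonormalization of ν against μ. Then λ_k(x) = μ_k(x) · √n (u − u_0)(1+x^2)/x for x ≠ 0, where u = k/n and u_0 = x^2/(1+x^2). -/

import Mathlib

theorem lambda_formula (n : ℕ) (hn : 1 ≤ n) (x : ℝ) (hx : x ≠ 0) (k : ℕ) (hk : k ≤ n) :
    let μ : ℕ → ℝ := fun k => x ^ k * Real.sqrt (n.choose k) / Real.sqrt ((1 + x ^ 2) ^ n)
    let ν : ℕ → ℝ := fun k => (k : ℝ) * x ^ (k - 1) * Real.sqrt (n.choose k) /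
      Real.sqrt (n * (1 + n * x ^ 2) * (1 + x ^ 2) ^ ((n : ℝ) - 2))
    let ρ : ℝ := x * Real.sqrt n / Real.sqrt (1 + n * x ^ 2)
    let τ : ℝ := 1 / Real.sqrt (1 + n * x ^ 2)
    (ν k - ρ * μ k) / τ
      = μ k * Real.sqrt n * ((k : ℝ) / n - x ^ 2 / (1 + x ^ 2)) * (1 + x ^ 2) / x := by
  intro μ ν ρ τ
  have ha : (0:ℝ) < 1 + x ^ 2 := by positivity
  have hnr : (0:ℝ) < (n:ℝ) := by exact_mod_cast hn
  have hb : (0:ℝ) < 1 + n * x ^ 2 := by positivity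
  have hA : (0:ℝ) < Real.sqrt ((1 + x ^ 2) ^ n) := Real.sqrt_pos.2 (by positivity)
  have hB : (0:ℝ) < Real.sqrt (1 + n * x ^ 2) := Real.sqrt_pos.2 hb
  have hN : (0:ℝ) < Real.sqrt n := Real.sqrt_pos.2 hnr
  have hrw : Real.sqrt (n * (1 + n * x ^ 2) * (1 + x ^ 2) ^ ((n : ℝ) - 2))
      = Real.sqrt n * Real.sqrt (1 + n * x ^ 2) * Real.sqrt ((1 + x ^ 2) ^ n)
        / (1 + x ^ 2) := by
    have h1 : (1 + x ^ 2) ^ ((n : ℝ) - 2) = (1 + x ^ 2) ^ n / (1 + x ^ 2) ^ 2 := by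
      rw [Real.rpow_sub ha, Real.rpow_natCast, Real.rpow_two]
    rw [h1, Real.sqrt_mul (by positivity), Real.sqrt_mul (by positivity),
      Real.sqrt_div' _ (by positivity), Real.sqrt_sq ha.le]
    ring
  have hBsq : Real.sqrt (1 + n * x ^ 2) * Real.sqrt (1 + n * x ^ 2) = 1 + n * x ^ 2 :=
    Real.mul_self_sqrt hb.le
  have hNsq : Real.sqrt n * Real.sqrt n = (n:ℝ) := Real.mul_self_sqrt hnr.le
  have hkx : (k:ℝ) * x ^ (k - 1) * x = (k:ℝ) * x ^ k := by
    cases k with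
    | zero => simp
    | succ m => simp [pow_succ]; ring
  show ((k : ℝ) * x ^ (k - 1) * Real.sqrt (n.choose k) /
      Real.sqrt (n * (1 + n * x ^ 2) * (1 + x ^ 2) ^ ((n : ℝ) - 2))
      - x * Real.sqrt n / Real.sqrt (1 + n * x ^ 2) *
        (x ^ k * Real.sqrt (n.choose k) / Real.sqrt ((1 + x ^ 2) ^ n))) /
      (1 / Real.sqrt (1 + n * x ^ 2))
      = x ^ k * Real.sqrt (n.choose k) / Real.sqrt ((1 + x ^ 2) ^ n) * Real.sqrt n *
        ((k : ℝ) / n - x ^ 2 / (1 + x ^ 2)) * (1 + x ^ 2) / x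
  rw [hrw]
  field_simp
  linear_combination
    (Real.sqrt (n.choose k) * (n:ℝ) * (1 + x ^ 2)) * hkx
    - (Real.sqrt (n.choose k) * (k:ℝ) * x ^ k * (1 + x ^ 2)) * hNsq
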